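/- Let (L, [-,-], ε) be a Leibniz color algebra and let N : L → L be a Nijenhuis operator, i.e. an even linear map with [N(x),N(y)] = N([N(x),y] + [x,N(y)] − N([x,y])) for all homogeneous x, y. Then L equipped with the bracket [x,y]_N := [N(x),y] + [x,N(y)] − N([x,y]) is again a Leibniz color algebra, and N is a morphism from (L, [-,-]_N) to (L, [-,-]), i.e. N([x,y]_N) = [N(x),N(y)]. -/

import Mathlib

/-- If `N` is a Nijenhuis operator on a Leibniz color algebra `L`, then
`[x,y]_N := [N(x),y] + [x,N(y)] - N([x,y])` is again a Leibniz color bracket, and `N` is a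
morphism from `(L, [-,-]_N)` to `(L, [-,-])`. -/
theorem leibniz_color_nijenhuis_operator
    {G K L : Type*} [AddCommGroup G] [DecidableEq G] [Field K] [AddCommGroup L] [Module K L]
    (hchar : ringChar K ≠ 2)
    (𝒜 : G → Submodule K L) [DirectSum.Decomposition 𝒜]
    (ε : G → G → Kˣ)
    (hε_skew : ∀ a b, ε a b * ε b a = 1)
    (hε_addr : ∀ a b c, ε a (b + c) = ε a b * ε a c)
    (hε_addl : ∀ a b c, ε (a + b) c = ε a c * ε b c)
    (br : L →ₗ[K] L →ₗ[K] L)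
    (hbr_even : ∀ a b, ∀ x ∈ 𝒜 a, ∀ y ∈ 𝒜 b, br x y ∈ 𝒜 (a + b))
    (hleib : ∀ a b c, ∀ x ∈ 𝒜 a, ∀ y ∈ 𝒜 b, ∀ z ∈ 𝒜 c,
      br (br x y) z = br x (br y z) + (ε b c : K) • br (br x z) y)
    (N : L →ₗ[K] L)
    (hN_even : ∀ a, ∀ x ∈ 𝒜 a, N x ∈ 𝒜 a)
    (hN : ∀ a b, ∀ x ∈ 𝒜 a, ∀ y ∈ 𝒜 b,
      br (N x) (N y) = N (br (N x) y + br x (N y) - N (br x y))) :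
    ∀ bkN : L → L → L,
      (∀ x y : L, bkN x y = br (N x) y + br x (N y) - N (br x y)) →
      (∀ a b c, ∀ x ∈ 𝒜 a, ∀ y ∈ 𝒜 b, ∀ z ∈ 𝒜 c,
        bkN (bkN x y) z = bkN x (bkN y z) + (ε b c : K) • bkN (bkN x z) y) ∧
      (∀ a b, ∀ x ∈ 𝒜 a, ∀ y ∈ 𝒜 b, N (bkN x y) = br (N x) (N y)) := by
  intro bkN hbkN
  constructor
  · intro a b c x hx y hy z hz
    have hNx := hN_even a x hx
    have hNy := hN_even b y hy
    have hNz := hN_even c z hz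
    set e : K := (ε b c : K) with he
    -- instances of the Leibniz identity
    have E1 := hleib a b c (N x) hNx (N y) hNy z hz
    have E2 := hleib a b c (N x) hNx y hy (N z) hNz
    have E3 := hleib a b c x hx (N y) hNy (N z) hNz
    have E4 := hleib a b c (N x) hNx y hy z hz
    have E5 := hleib a b c x hx (N y) hNy z hz
    have E6 := hleib a b c x hx y hy (N z) hNz
    have E7 := hleib a b c x hx y hy z hz
    -- Leibniz instances pushed through N (and N ∘ N)
    have NE4 : N (br (br (N x) y) z)
        = N (br (N x) (br y z)) + e • N (br (br (N x) z) y) := by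
      rw [E4]; simp [map_add, map_smul, he]
    have NE5 : N (br (br x (N y)) z)
        = N (br x (br (N y) z)) + e • N (br (br x z) (N y)) := by
      rw [E5]; simp [map_add, map_smul, he]
    have NE6 : N (br (br x y) (N z))
        = N (br x (br y (N z))) + e • N (br (br x (N z)) y) := by
      rw [E6]; simp [map_add, map_smul, he]
    have NNE7 : N (N (br (br x y) z))
        = N (N (br x (br y z))) + e • N (N (br (br x z) y)) := by
      rw [E7]; simp [map_add, map_smul, he]
    -- instances of the Nijenhuis identity, expanded
    have N1 : br (N (br x y)) (N z)
        = N (br (N (br x y)) z) + N (br (br x y) (N z)) - N (N (br (br x y) z)) := by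
      rw [hN (a + b) c (br x y) (hbr_even a b x hx y hy) z hz]
      simp [map_add, map_sub]
    have N2 : br (N x) (N (br y z))
        = N (br (N x) (br y z)) + N (br x (N (br y z))) - N (N (br x (br y z))) := by
      rw [hN a (b + c) x hx (br y z) (hbr_even b c y hy z hz)]
      simp [map_add, map_sub]
    have N3 : br (N (br x z)) (N y)
        = N (br (N (br x z)) y) + N (br (br x z) (N y)) - N (N (br (br x z) y)) := by
      rw [hN (a + c) b (br x z) (hbr_even a c x hx z hz) y hy]
      simp [map_add, map_sub]
    -- the three Nijenhuis substitutions at top level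
    have H1 : N (bkN x y) = br (N x) (N y) := by
      rw [hbkN]; exact (hN a b x hx y hy).symm
    have H2 : N (bkN y z) = br (N y) (N z) := by
      rw [hbkN]; exact (hN b c y hy z hz).symm
    have H3 : N (bkN x z) = br (N x) (N z) := by
      rw [hbkN]; exact (hN a c x hx z hz).symm
    rw [hbkN (bkN x y) z, hbkN x (bkN y z), hbkN (bkN x z) y, H1, H2, H3,
      hbkN x y, hbkN y z, hbkN x z]
    simp only [map_add, map_sub, LinearMap.add_apply, LinearMap.sub_apply]
    linear_combination (norm := module)
      E1 + E2 + E3 - N1 + N2 + e • N3 - NE4 - NE5 - NE6 + NNE7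
  · intro a b x hx y hy
    rw [hbkN]; exact (hN a b x hx y hy).symm
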